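/- Let R > 0, A > 0, C > 0, k = √(R/3), and define ρ, p : (0,∞) → ℝ by ρ(t) = (R/4)·coth²(k·t) + (C·A²/2)·sinh(k·t) and p(t) = (1/3)[ρ(t) − R − 3C·A²·sinh(k·t)]. Then lim_{t→0⁺} p(t)/ρ(t) = 1/3 and lim_{t→∞} p(t)/ρ(t) = −5/3. (The cosmological fluid behaves as radiation, p ≈ ρ/3, in the early universe and as phantom energy, p ≈ −(5/3)ρ, in the late universe.) -/

import Mathlib

/-- The hyperbolic cotangent. -/
noncomputable def Real.coth (x : ℝ) : ℝ := Real.cosh x / Real.sinh x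

/-- In the constant-curvature model of Conformal Killing gravity, with
`ρ(t) = (R/4) coth²(kt) + (CA²/2) sinh(kt)` and `p = (1/3)(ρ - R - 3CA² sinh(kt))`,
the equation-of-state ratio `p/ρ` tends to `1/3` as `t → 0⁺` (radiation era) and to
`-5/3` as `t → ∞` (phantom energy era). -/
theorem equation_of_state_limits
    (R A C : ℝ) (hR : R > 0) (hA : A > 0) (hC : C > 0)
    (k : ℝ) (hk : k = Real.sqrt (R/3))
    (ρ p : ℝ → ℝ)
    (hρ : ∀ t, ρ t = (R/4) * Real.coth (k * t) ^ 2 + (C * A ^ 2 / 2) * Real.sinh (k * t))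
    (hp : ∀ t, p t = (1/3) * (ρ t - R - 3 * C * A ^ 2 * Real.sinh (k * t))) :
    Filter.Tendsto (fun t => p t / ρ t) (nhdsWithin 0 (Set.Ioi 0)) (nhds (1/3)) ∧
    Filter.Tendsto (fun t => p t / ρ t) Filter.atTop (nhds (-(5/3))) := by
  have hk0 : 0 < k := by
    rw [hk]; exact Real.sqrt_pos.mpr (by positivity)
  have key : ∀ t : ℝ, 0 < t →
      p t / ρ t = 1/3 - (1/3) * ((R + 3*C*A^2 * Real.sinh (k*t)) * Real.sinh (k*t)^2 /
        ((R/4) * Real.cosh (k*t)^2 + (C*A^2/2) * Real.sinh (k*t)^3)) := by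
    intro t ht
    have hs : 0 < Real.sinh (k*t) := Real.sinh_pos_iff.mpr (by positivity)
    have hc : 0 < Real.cosh (k*t) := Real.cosh_pos _
    have hden : 0 < (R/4) * Real.cosh (k*t)^2 + (C*A^2/2) * Real.sinh (k*t)^3 := by positivity
    have hρt : 0 < (R/4) * Real.coth (k * t) ^ 2 + (C * A ^ 2 / 2) * Real.sinh (k * t) := by
      have h1 : 0 ≤ (R/4) * Real.coth (k * t) ^ 2 := by positivity
      have h2 : 0 < (C * A ^ 2 / 2) * Real.sinh (k * t) := by positivity
      linarith
    rw [hp t, hρ t, Real.coth]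
    field_simp
    ring
  constructor
  · -- limit at 0⁺
    have hnum : Filter.Tendsto (fun t : ℝ => (R + 3*C*A^2 * Real.sinh (k*t)) * Real.sinh (k*t)^2)
        (nhds 0) (nhds 0) := by
      have hco : Continuous (fun t : ℝ => (R + 3*C*A^2 * Real.sinh (k*t)) * Real.sinh (k*t)^2) := by
        have h1 : Continuous (fun t : ℝ => Real.sinh (k*t)) :=
          Real.continuous_sinh.comp (continuous_const.mul continuous_id)
        exact (continuous_const.add (continuous_const.mul h1)).mul (h1.pow 2)
      simpa using hco.tendsto 0
    have hden : Filter.Tendsto (fun t : ℝ => (R/4) * Real.cosh (k*t)^2 + (C*A^2/2) * Real.sinh (k*t)^3)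
        (nhds 0) (nhds (R/4)) := by
      have hco : Continuous (fun t : ℝ => (R/4) * Real.cosh (k*t)^2 + (C*A^2/2) * Real.sinh (k*t)^3) := by
        have h1 : Continuous (fun t : ℝ => Real.sinh (k*t)) :=
          Real.continuous_sinh.comp (continuous_const.mul continuous_id)
        have h2 : Continuous (fun t : ℝ => Real.cosh (k*t)) :=
          Real.continuous_cosh.comp (continuous_const.mul continuous_id)
        exact (continuous_const.mul (h2.pow 2)).add (continuous_const.mul (h1.pow 3))
      simpa using hco.tendsto 0
    have hF : Filter.Tendsto (fun t => (R + 3*C*A^2 * Real.sinh (k*t)) * Real.sinh (k*t)^2 /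
        ((R/4) * Real.cosh (k*t)^2 + (C*A^2/2) * Real.sinh (k*t)^3)) (nhds 0) (nhds 0) := by
      have := hnum.div hden (by positivity)
      rwa [zero_div] at this
    have hF' := hF.mono_left (nhdsWithin_le_nhds : nhdsWithin (0:ℝ) (Set.Ioi 0) ≤ nhds 0)
    have hlim : Filter.Tendsto (fun t => 1/3 - (1/3) * ((R + 3*C*A^2 * Real.sinh (k*t)) * Real.sinh (k*t)^2 /
        ((R/4) * Real.cosh (k*t)^2 + (C*A^2/2) * Real.sinh (k*t)^3)))
        (nhdsWithin (0:ℝ) (Set.Ioi 0)) (nhds (1/3)) := by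
      have := (tendsto_const_nhds (x := (1:ℝ)/3) (f := nhdsWithin (0:ℝ) (Set.Ioi 0))).sub
        ((tendsto_const_nhds (x := (1:ℝ)/3) (f := nhdsWithin (0:ℝ) (Set.Ioi 0))).mul hF')
      simpa using this
    refine hlim.congr' ?_
    filter_upwards [self_mem_nhdsWithin] with t ht
    exact (key t ht).symm
  · -- limit at ∞
    have hsinh : Filter.Tendsto (fun t : ℝ => Real.sinh (k*t)) Filter.atTop Filter.atTop := by
      have h1 : Filter.Tendsto (fun t : ℝ => k * t) Filter.atTop Filter.atTop :=
        Filter.tendsto_id.const_mul_atTop hk0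
      refine Filter.tendsto_atTop_mono' _ ?_ h1
      filter_upwards [h1.eventually_ge_atTop 0] with t ht
      exact Real.self_le_sinh_iff.mpr ht
    have hinv : Filter.Tendsto (fun t : ℝ => (Real.sinh (k*t))⁻¹) Filter.atTop (nhds 0) :=
      hsinh.inv_tendsto_atTop
    have hnum : Filter.Tendsto (fun t : ℝ => R * (Real.sinh (k*t))⁻¹ + 3*C*A^2)
        Filter.atTop (nhds (3*C*A^2)) := by
      have := ((tendsto_const_nhds (x := R)).mul hinv).add
        (tendsto_const_nhds (x := 3*C*A^2) (f := Filter.atTop))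
      simpa using this
    have hden : Filter.Tendsto (fun t : ℝ => (R/4) * (((Real.sinh (k*t))⁻¹)^3 + (Real.sinh (k*t))⁻¹) + C*A^2/2)
        Filter.atTop (nhds (C*A^2/2)) := by
      have := ((tendsto_const_nhds (x := R/4)).mul ((hinv.pow 3).add hinv)).add
        (tendsto_const_nhds (x := C*A^2/2) (f := Filter.atTop))
      simpa using this
    have hF : Filter.Tendsto (fun t : ℝ => (R * (Real.sinh (k*t))⁻¹ + 3*C*A^2) /
        ((R/4) * (((Real.sinh (k*t))⁻¹)^3 + (Real.sinh (k*t))⁻¹) + C*A^2/2))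
        Filter.atTop (nhds 6) := by
      have := hnum.div hden (by positivity)
      have h6 : (3*C*A^2) / (C*A^2/2) = 6 := by
        field_simp; ring
      rwa [h6] at this
    have hlim : Filter.Tendsto (fun t : ℝ => 1/3 - (1/3) * ((R * (Real.sinh (k*t))⁻¹ + 3*C*A^2) /
        ((R/4) * (((Real.sinh (k*t))⁻¹)^3 + (Real.sinh (k*t))⁻¹) + C*A^2/2)))
        Filter.atTop (nhds (-(5/3))) := by
      have := (tendsto_const_nhds (x := (1:ℝ)/3) (f := Filter.atTop)).sub
        ((tendsto_const_nhds (x := (1:ℝ)/3) (f := Filter.atTop)).mul hF)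
      norm_num at this ⊢
      convert this using 2
    refine hlim.congr' ?_
    filter_upwards [Filter.eventually_gt_atTop 0] with t ht
    have hs : 0 < Real.sinh (k*t) := Real.sinh_pos_iff.mpr (by positivity)
    have hc : 0 < Real.cosh (k*t) := Real.cosh_pos _
    have hd1 : 0 < (R/4) * Real.cosh (k*t)^2 + (C*A^2/2) * Real.sinh (k*t)^3 := by positivity
    have hd2 : 0 < (R/4) * (((Real.sinh (k*t))⁻¹)^3 + (Real.sinh (k*t))⁻¹) + C*A^2/2 := by positivity
    rw [key t ht]
    have hcosh : Real.cosh (k*t)^2 = Real.sinh (k*t)^2 + 1 := Real.cosh_sq (k*t)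
    rw [hcosh]
    field_simp
    ring
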